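/- 18/(5π) = 1 + (5/36)∑_{n=0}^∞ (1/6)_n (5/6)_n/((n+1)!)^2. -/

import Mathlib

open Real

noncomputable def rising (x : ℝ) (n : ℕ) : ℝ := ∏ i ∈ Finset.range n, (x + i)

open Filter Topology

noncomputable def tt (N : ℕ) : ℝ :=
  rising (1/6) N * rising (5/6) N / (N.factorial : ℝ) ^ 2

noncomputable def dd (N : ℕ) : ℝ := (1296/25 * N + 36/5) * tt N

lemma rising_pos {x : ℝ} (hx : 0 < x) (n : ℕ) : 0 < rising x n := by
  apply Finset.prod_pos
  intro i _
  positivity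

lemma rising_succ (x : ℝ) (n : ℕ) : rising x (n + 1) = rising x n * (x + n) :=
  Finset.prod_range_succ _ _

lemma gammaSeq_pos {s : ℝ} (hs : 0 < s) (n : ℕ) (hn : 1 ≤ n) :
    0 < Real.GammaSeq s n := by
  unfold Real.GammaSeq
  have h1 : (0:ℝ) < (n : ℝ) ^ s := Real.rpow_pos_of_pos (by exact_mod_cast hn) s
  have h2 : (0:ℝ) < ∏ j ∈ Finset.range (n+1), (s + j) :=
    Finset.prod_pos fun i _ => by positivity
  positivity

lemma step (n : ℕ) :
    dd (n + 1) - dd n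
      = rising (1/6) n * rising (5/6) n / ((n + 1).factorial : ℝ) ^ 2 := by
  have hf : ((n.factorial : ℝ)) ≠ 0 := by
    exact_mod_cast n.factorial_ne_zero
  have hn1 : ((n : ℝ) + 1) ≠ 0 := by positivity
  unfold dd tt
  rw [rising_succ, rising_succ, Nat.factorial_succ]
  push_cast
  field_simp
  ring

lemma sum_eq (N : ℕ) :
    ∑ n ∈ Finset.range N,
      rising (1/6) n * rising (5/6) n / ((n + 1).factorial : ℝ) ^ 2
      = dd N - 36/5 := by
  have : ∑ n ∈ Finset.range N,
      rising (1/6) n * rising (5/6) n / ((n + 1).factorial : ℝ) ^ 2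
      = ∑ n ∈ Finset.range N, (dd (n+1) - dd n) := by
    refine Finset.sum_congr rfl fun n _ => (step n).symm
  rw [this, Finset.sum_range_sub]
  have : dd 0 = 36/5 := by
    unfold dd tt rising
    simp
  rw [this]

lemma aux_ratio (c : ℝ) :
    Tendsto (fun n : ℕ => (n : ℝ) / ((n : ℝ) + c)) atTop (𝓝 1) := by
  have h : Tendsto (fun n : ℕ => (n : ℝ) + c) atTop atTop :=
    tendsto_atTop_add_const_right _ c tendsto_natCast_atTop_atTop
  have h2 : Tendsto (fun n : ℕ => ((n : ℝ) + c)⁻¹) atTop (𝓝 0) :=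
    h.inv_tendsto_atTop
  have h3 : Tendsto (fun n : ℕ => 1 - c * ((n : ℝ) + c)⁻¹) atTop (𝓝 1) := by
    have := (tendsto_const_nhds (x := (1:ℝ)) (f := atTop)).sub
      (h2.const_mul c)
    simpa using this
  refine h3.congr' ?_
  filter_upwards [h.eventually_ne_atTop 0] with n hn
  field_simp
  ring

lemma gamma_prod : Real.Gamma (1/6) * Real.Gamma (5/6) = 2 * π := by
  have := Real.Gamma_mul_Gamma_one_sub (1/6)
  have h6 : (1:ℝ) - 1/6 = 5/6 := by norm_num
  rw [h6] at this
  rw [this]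
  have : π * (1/6) = π / 6 := by ring
  rw [this, Real.sin_pi_div_six]
  field_simp

lemma tt_mul_tendsto :
    Tendsto (fun n : ℕ => (n : ℝ) * tt n) atTop (𝓝 (1 / (2 * π))) := by
  have hG6 := Real.GammaSeq_tendsto_Gamma (1/6)
  have hG56 := Real.GammaSeq_tendsto_Gamma (5/6)
  have hΓ : Real.Gamma (1/6) * Real.Gamma (5/6) ≠ 0 := by
    rw [gamma_prod]; positivity
  have hinv : Tendsto (fun n : ℕ =>
      (Real.GammaSeq (1/6) n * Real.GammaSeq (5/6) n)⁻¹) atTop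
      (𝓝 ((Real.Gamma (1/6) * Real.Gamma (5/6)))⁻¹) :=
    (hG6.mul hG56).inv₀ hΓ
  have hratio : Tendsto (fun n : ℕ =>
      (n : ℝ) ^ 2 / (((n : ℝ) + 1/6) * ((n : ℝ) + 5/6))) atTop (𝓝 1) := by
    have := (aux_ratio (1/6)).mul (aux_ratio (5/6))
    rw [mul_one] at this
    refine this.congr fun n => ?_
    rw [div_mul_div_comm, sq]
  have hmul := hratio.mul hinv
  rw [one_mul, gamma_prod] at hmul
  rw [show ((2:ℝ)*π)⁻¹ = 1/(2*π) by rw [one_div]] at hmul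
  refine hmul.congr' ?_
  filter_upwards [eventually_ge_atTop 1] with n hn
  have hnpos : (0:ℝ) < (n : ℝ) := by exact_mod_cast hn
  have hG6p := gammaSeq_pos (by norm_num : (0:ℝ) < 1/6) n hn
  have hG56p := gammaSeq_pos (by norm_num : (0:ℝ) < 5/6) n hn
  have hf : ((n.factorial : ℝ)) ≠ 0 := by exact_mod_cast n.factorial_ne_zero
  have hr6 : rising (1/6) n =
      (n : ℝ) ^ ((1:ℝ)/6) * n.factorial / (Real.GammaSeq (1/6) n * (1/6 + n)) := by
    have hprod : (0:ℝ) < ∏ j ∈ Finset.range (n+1), ((1:ℝ)/6 + j) :=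
      Finset.prod_pos fun i _ => by positivity
    rw [Real.GammaSeq]
    rw [Finset.prod_range_succ]
    have h1 : ((1:ℝ)/6 + n) ≠ 0 := by positivity
    have h2 : (rising (1/6) n) ≠ 0 := ne_of_gt (rising_pos (by norm_num) n)
    rw [show (∏ j ∈ Finset.range n, ((1:ℝ)/6 + j)) = rising (1/6) n from rfl]
    field_simp
  have hr56 : rising (5/6) n =
      (n : ℝ) ^ ((5:ℝ)/6) * n.factorial / (Real.GammaSeq (5/6) n * (5/6 + n)) := by
    rw [Real.GammaSeq]
    rw [Finset.prod_range_succ]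
    have h1 : ((5:ℝ)/6 + n) ≠ 0 := by positivity
    have h2 : (rising (5/6) n) ≠ 0 := ne_of_gt (rising_pos (by norm_num) n)
    rw [show (∏ j ∈ Finset.range n, ((5:ℝ)/6 + j)) = rising (5/6) n from rfl]
    field_simp
  unfold tt
  rw [hr6, hr56]
  have hpow : (n : ℝ) ^ ((1:ℝ)/6) * (n : ℝ) ^ ((5:ℝ)/6) = (n : ℝ) := by
    rw [← Real.rpow_add hnpos]
    norm_num
  have h16 : ((1:ℝ)/6 + n) ≠ 0 := by positivity
  have h56 : ((5:ℝ)/6 + n) ≠ 0 := by positivity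
  rw [show ((n:ℝ))^2 = (n:ℝ) ^ ((1:ℝ)/6) * (n:ℝ) ^ ((5:ℝ)/6) * n by rw [hpow]; ring]
  field_simp
  ring

lemma tt_tendsto : Tendsto tt atTop (𝓝 0) := by
  have h := tt_mul_tendsto
  have hinv : Tendsto (fun n : ℕ => ((n:ℝ))⁻¹) atTop (𝓝 0) :=
    tendsto_inv_atTop_zero.comp tendsto_natCast_atTop_atTop
  have := hinv.mul h
  rw [zero_mul] at this
  refine this.congr' ?_
  filter_upwards [eventually_ge_atTop 1] with n hn
  have : ((n:ℝ)) ≠ 0 := by positivity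
  field_simp

lemma dd_tendsto : Tendsto dd atTop (𝓝 (648 / (25 * π))) := by
  have h1 := tt_mul_tendsto.const_mul (1296/25 : ℝ)
  have h2 := tt_tendsto.const_mul (36/5 : ℝ)
  have := h1.add h2
  rw [mul_zero, add_zero] at this
  have heq : (1296/25 : ℝ) * (1 / (2 * π)) = 648 / (25 * π) := by
    ring
  rw [heq] at this
  refine this.congr fun n => ?_
  unfold dd
  ring

theorem stmt16 :
    18 / (5 * π) = 1 + (5/36) *
      ∑' n : ℕ, rising (1/6) n * rising (5/6) n / ((n + 1).factorial : ℝ) ^ 2 := by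
  have hnonneg : ∀ n : ℕ,
      0 ≤ rising (1/6) n * rising (5/6) n / ((n + 1).factorial : ℝ) ^ 2 := by
    intro n
    have h1 := rising_pos (show (0:ℝ) < 1/6 by norm_num) n
    have h2 := rising_pos (show (0:ℝ) < 5/6 by norm_num) n
    positivity
  have hsum : HasSum
      (fun n : ℕ => rising (1/6) n * rising (5/6) n / ((n + 1).factorial : ℝ) ^ 2)
      (648 / (25 * π) - 36/5) := by
    rw [hasSum_iff_tendsto_nat_of_nonneg hnonneg]
    have : Tendsto (fun N => dd N - 36/5) atTop (𝓝 (648 / (25 * π) - 36/5)) :=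
      dd_tendsto.sub_const _
    refine this.congr fun N => (sum_eq N).symm
  rw [hsum.tsum_eq]
  have hπ : π ≠ 0 := Real.pi_ne_zero
  field_simp
  ring
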